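/- Lemma (primal utility on rounds with large multipliers, inequality (intermediate1)). Let S be a finite set of rounds such that ‖λ_t‖₁ ≥ 1/ν for every t ∈ S, and suppose R ≥ 0 satisfies the primal regret bound against the void action on S: ∑_{t∈S} ( f_t(x₀) + ⟨λ_t, ρ·𝟙 − c_t(x₀)⟩ ) − ∑_{t∈S} ( f_t(x_t) + ⟨λ_t, ρ·𝟙 − c_t(x_t)⟩ ) ≤ R. Then ∑_{t∈S} ( f_t(x_t) + ⟨λ_t, ρ·𝟙 − c_t(x_t)⟩ ) ≥ |S| − R. -/
import Mathlib

/-- Lemma (primal utility on rounds with large multipliers, inequality (intermediate1)).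
Rounds with large multipliers: if `‖λ_t‖₁ ≥ 1/ν` on a finite set `S` of rounds and the
primal regret against the void action on `S` is at most `R`, then the cumulative primal
Lagrangian utility on `S` is at least `|S| - R`. -/
theorem stmt_14 (T m : ℕ) (hT : 1 ≤ T) (hm : 1 ≤ m)
    (X : Type*) [Nonempty X] (x₀ : X)
    (β ρ : ℝ) (hβ : 0 ≤ β) (hρ0 : 0 < ρ) (hρ1 : ρ ≤ 1)
    (f : ℕ → X → ℝ)
    (hf0 : ∀ t ∈ Finset.Icc 1 T, ∀ x, 0 ≤ f t x)
    (hf1 : ∀ t ∈ Finset.Icc 1 T, ∀ x, f t x ≤ 1)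
    (c : ℕ → X → Fin m → ℝ)
    (hc : ∀ t ∈ Finset.Icc 1 T, ∀ x i, |c t x i| ≤ 1)
    (hcx₀ : ∀ t ∈ Finset.Icc 1 T, ∀ i, c t x₀ i ≤ -β)
    (x : ℕ → X) (lam : ℕ → Fin m → ℝ)
    (hlam : ∀ t ∈ Finset.Icc 1 T, ∀ i, 0 ≤ lam t i)
    (S : Finset ℕ) (hS : S ⊆ Finset.Icc 1 T)
    (hbig : ∀ t ∈ S, 1 / (β + ρ) ≤ ∑ i, lam t i)
    (R : ℝ) (hR : 0 ≤ R)
    (hreg : ∑ t ∈ S, (f t x₀ + ∑ i, lam t i * (ρ - c t x₀ i))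
              - ∑ t ∈ S, (f t (x t) + ∑ i, lam t i * (ρ - c t (x t) i)) ≤ R) :
    ∑ t ∈ S, (f t (x t) + ∑ i, lam t i * (ρ - c t (x t) i)) ≥ (S.card : ℝ) - R := by
  have hν : 0 < β + ρ := by linarith
  have hlow : (S.card : ℝ) ≤ ∑ t ∈ S, (f t x₀ + ∑ i, lam t i * (ρ - c t x₀ i)) := by
    calc (S.card : ℝ) = ∑ t ∈ S, (1 : ℝ) := by simp
    _ ≤ _ := by
      apply Finset.sum_le_sum
      intro t ht
      have htT := hS ht
      have h1 : (β + ρ) * (∑ i, lam t i) ≤ ∑ i, lam t i * (ρ - c t x₀ i) := by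
        rw [Finset.mul_sum]
        apply Finset.sum_le_sum
        intro i _
        have := hcx₀ t htT i
        have := hlam t htT i
        nlinarith
      have h2 : (1 : ℝ) ≤ (β + ρ) * (∑ i, lam t i) := by
        have := hbig t ht
        rw [div_le_iff₀ hν] at this
        linarith [this]
      have := hf0 t htT x₀
      linarith
  linarith
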